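/- Let N ∈ ℕ, 1 ≤ n⁻ ≤ N, β ∈ (0,1), λ > 0, ȳ > 0, let W⁻ be a probability weighting function, let h⁻ be the loss decision weights, and let v satisfy 0 ≤ v ≤ ȳ·∑_{i=1}^{n⁻} h⁻_i. Then there exist integers ℓ₁, ℓ₂ with 0 ≤ ℓ₁ < ℓ₂ ≤ n⁻ and a real number Y with 0 ≤ Y ≤ ȳ, namely Y = (v − ȳ·∑_{i=1}^{ℓ₁} h⁻_i) / ∑_{i=ℓ₁+1}^{ℓ₂} h⁻_i, such that the vector y* defined by y*_i = ȳ for 1 ≤ i ≤ ℓ₁, y*_i = Y for ℓ₁+1 ≤ i ≤ ℓ₂, and y*_i = 0 for ℓ₂+1 ≤ i ≤ n⁻ is a global optimum of the price-constrained loss subproblem: y* is feasible and for every feasible y, −∑_{i=1}^{n⁻} (y*_i/λ)^{1/β} ≤ −∑_{i=1}^{n⁻} (y_i/λ)^{1/β}. -/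

import Mathlib

open Finset

/-- An inverse S-shaped function on `[0,1]`: strictly increasing, continuously
differentiable, with a derivative strictly decreasing then strictly increasing. -/
def InverseSShaped (W : ℝ → ℝ) : Prop :=
  StrictMonoOn W (Set.Icc (0 : ℝ) 1) ∧
  ContDiffOn ℝ 1 W (Set.Icc (0 : ℝ) 1) ∧
  ∃ x₀ ∈ Set.Icc (0 : ℝ) 1,
    StrictAntiOn (deriv W) (Set.Icc (0 : ℝ) x₀) ∧ StrictMonoOn (deriv W) (Set.Icc x₀ 1)

/-- A probability weighting function: inverse S-shaped with `W 0 = 0` and `W 1 = 1`. -/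
def IsPWF (W : ℝ → ℝ) : Prop :=
  InverseSShaped W ∧ W 0 = 0 ∧ W 1 = 1

/-- Loss decision weights: `h⁻_i = W⁻(i/N) − W⁻((i−1)/N)` for `i = 1,…,n⁻`. -/
noncomputable def lossW (W : ℝ → ℝ) (N i : ℕ) : ℝ :=
  W ((i : ℝ) / N) - W (((i : ℝ) - 1) / N)

/-- Feasibility for the loss subproblem: `y_1 ≥ y_2 ≥ … ≥ y_n ≥ 0` and `∑ h⁻_i y_i = v`. -/
def LossFeasible (W : ℝ → ℝ) (N n : ℕ) (v : ℝ) (y : ℕ → ℝ) : Prop :=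
  0 ≤ y n ∧ (∀ i ∈ Finset.Icc 1 (n - 1), y (i + 1) ≤ y i) ∧
  ∑ i ∈ Finset.Icc 1 n, lossW W N i * y i = v

/-- Feasibility for the price-constrained loss subproblem:
`ȳ ≥ y_1 ≥ y_2 ≥ … ≥ y_n ≥ 0` and `∑ h⁻_i y_i = v`. -/
def PLossFeasible (W : ℝ → ℝ) (N n : ℕ) (ybar v : ℝ) (y : ℕ → ℝ) : Prop :=
  y 1 ≤ ybar ∧ 0 ≤ y n ∧ (∀ i ∈ Finset.Icc 1 (n - 1), y (i + 1) ≤ y i) ∧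
  ∑ i ∈ Finset.Icc 1 n, lossW W N i * y i = v

namespace PLossAux

lemma Icc1 (x : ℕ) : Icc 1 x = Ioc 0 x := by
  ext t; simp [mem_Icc, mem_Ioc]; omega

lemma telescope (g : ℕ → ℝ) : ∀ n i : ℕ, i ≤ n →
    ∑ j ∈ Icc i n, (g j - g (j+1)) = g i - g (n+1) := by
  intro n
  induction n with
  | zero => intro i hi; interval_cases i; simp
  | succ n ih =>
    intro i hi
    rw [Finset.sum_Icc_succ_top (by omega)]
    rcases Nat.lt_or_ge i (n+1) with h | h
    · rw [ih i (by omega)]; ring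
    · have hi' : i = n + 1 := by omega
      subst hi'
      have : Icc (n+1) n = (∅ : Finset ℕ) := Finset.Icc_eq_empty (by omega)
      simp [this]

lemma swap (h e : ℕ → ℝ) (n : ℕ) :
    ∑ j ∈ Icc 1 n, (∑ i ∈ Icc 1 j, h i) * e j
      = ∑ i ∈ Icc 1 n, h i * ∑ j ∈ Icc i n, e j := by
  simp_rw [Finset.sum_mul, Finset.mul_sum]
  exact Finset.sum_comm' (by intro x y; simp only [mem_Icc]; omega)

lemma phi_convex {β lam : ℝ} (hβ0 : 0 < β) (hβ1 : β < 1) (hlam : 0 < lam)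
    {s t θ μ : ℝ} (hs : 0 ≤ s) (ht : 0 ≤ t) (hθ : 0 ≤ θ) (hμ : 0 ≤ μ) (hθμ : θ + μ = 1) :
    ((θ * s + μ * t) / lam) ^ (1/β) ≤ θ * ((s/lam) ^ (1/β)) + μ * ((t/lam) ^ (1/β)) := by
  have hp : (1:ℝ) ≤ 1/β := by rw [le_div_iff₀ hβ0]; linarith
  have hc := (convexOn_rpow hp).2 (Set.mem_Ici.2 (div_nonneg hs hlam.le))
    (Set.mem_Ici.2 (div_nonneg ht hlam.le)) hθ hμ hθμ
  have key : (θ * s + μ * t) / lam = θ * (s/lam) + μ * (t/lam) := by ring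
  rw [key]
  simpa using hc

lemma sum_two {g : ℕ → ℝ} {a b : ℕ} (hab : a ≠ b) (s : Finset ℕ)
    (hz : ∀ i ∈ s, i ≠ a → i ≠ b → g i = 0) :
    ∑ i ∈ s, g i = (if a ∈ s then g a else 0) + (if b ∈ s then g b else 0) := by
  have hcg : ∀ i ∈ s, g i = (if i = a then g a else 0) + (if i = b then g b else 0) := by
    intro i hi
    by_cases h1 : i = a
    · subst h1; simp [hab]
    · by_cases h2 : i = b
      · subst h2; simp [Ne.symm hab]
      · simp [h1, h2, hz i hi h1 h2]
  rw [Finset.sum_congr rfl hcg, Finset.sum_add_distrib, Finset.sum_ite_eq', Finset.sum_ite_eq']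

lemma sum_three {g : ℕ → ℝ} {a b c : ℕ} (hab : a ≠ b) (hac : a ≠ c) (hbc : b ≠ c)
    (s : Finset ℕ) (hz : ∀ i ∈ s, i ≠ a → i ≠ b → i ≠ c → g i = 0) :
    ∑ i ∈ s, g i = (if a ∈ s then g a else 0) + (if b ∈ s then g b else 0)
      + (if c ∈ s then g c else 0) := by
  have hcg : ∀ i ∈ s, g i = (if i = a then g a else 0) + (if i = b then g b else 0)
      + (if i = c then g c else 0) := by
    intro i hi
    by_cases h1 : i = a
    · subst h1; simp [hab, hac]
    · by_cases h2 : i = b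
      · subst h2; simp [Ne.symm hab, hbc]
      · by_cases h3 : i = c
        · subst h3; simp [Ne.symm hac, Ne.symm hbc]
        · simp [h1, h2, h3, hz i hi h1 h2 h3]
  rw [Finset.sum_congr rfl hcg, Finset.sum_add_distrib, Finset.sum_add_distrib,
    Finset.sum_ite_eq', Finset.sum_ite_eq', Finset.sum_ite_eq']

noncomputable def Hw (W : ℝ → ℝ) (N l : ℕ) : ℝ := ∑ i ∈ Icc 1 l, lossW W N i

lemma lossW_pos {W : ℝ → ℝ} {N : ℕ} (hW : IsPWF W) {i : ℕ} (h1 : 1 ≤ i) (h2 : i ≤ N) :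
    0 < lossW W N i := by
  have hN0 : 0 < N := by omega
  have hN : 0 < (N:ℝ) := by exact_mod_cast hN0
  have hi1 : (1:ℝ) ≤ (i:ℝ) := by exact_mod_cast h1
  have hiN : (i:ℝ) ≤ (N:ℝ) := by exact_mod_cast h2
  have m1 : ((i:ℝ)-1)/N ∈ Set.Icc (0:ℝ) 1 :=
    ⟨div_nonneg (by linarith) hN.le, by rw [div_le_one hN]; linarith⟩
  have m2 : (i:ℝ)/N ∈ Set.Icc (0:ℝ) 1 :=
    ⟨div_nonneg (by linarith) hN.le, by rw [div_le_one hN]; linarith⟩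
  have hlt : ((i:ℝ)-1)/N < (i:ℝ)/N := by
    rw [div_lt_div_iff₀ hN hN]; nlinarith
  exact sub_pos.2 (hW.1.1 m1 m2 hlt)

lemma Hw_zero (W : ℝ → ℝ) (N : ℕ) : Hw W N 0 = 0 := by
  unfold Hw; rw [Icc1]; simp

lemma Hw_split (W : ℝ → ℝ) (N : ℕ) {a b : ℕ} (hab : a ≤ b) :
    Hw W N a + ∑ i ∈ Ioc a b, lossW W N i = Hw W N b := by
  unfold Hw; rw [Icc1, Icc1]
  exact Finset.sum_Ioc_consecutive _ (Nat.zero_le a) hab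

lemma Hw_gap_pos {W : ℝ → ℝ} {N : ℕ} (hW : IsPWF W) {a b : ℕ} (hab : a < b) (hbN : b ≤ N) :
    0 < Hw W N b - Hw W N a := by
  have hs := Hw_split W N hab.le
  have pos : 0 < ∑ i ∈ Ioc a b, lossW W N i := by
    apply Finset.sum_pos
    · intro i hi
      rw [mem_Ioc] at hi
      exact lossW_pos hW (by omega) (le_trans hi.2 hbN)
    · exact ⟨b, mem_Ioc.2 ⟨hab, le_rfl⟩⟩
  linarith

noncomputable def Yf (W : ℝ → ℝ) (N : ℕ) (ybar v : ℝ) (a b : ℕ) : ℝ :=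
  (v - ybar * Hw W N a) / (Hw W N b - Hw W N a)

noncomputable def corner (W : ℝ → ℝ) (N : ℕ) (ybar v : ℝ) (a b : ℕ) : ℕ → ℝ :=
  fun i => if i ≤ a then ybar else if i ≤ b then Yf W N ybar v a b else 0

noncomputable def Sset (W : ℝ → ℝ) (N n : ℕ) (ybar v : ℝ) : Finset (ℕ × ℕ) :=
  ((range (n+1)) ×ˢ (range (n+1))).filter
    (fun p => p.1 < p.2 ∧ 0 ≤ Yf W N ybar v p.1 p.2 ∧ Yf W N ybar v p.1 p.2 ≤ ybar)

def FeasE (W : ℝ → ℝ) (N n : ℕ) (ybar v : ℝ) (e : ℕ → ℝ) : Prop :=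
  (∀ i, i ≤ n → 0 ≤ e i) ∧ (∑ i ∈ range (n+1), e i = ybar) ∧
    (∑ i ∈ range (n+1), Hw W N i * e i = v)

noncomputable def Gfun (lam β : ℝ) (n : ℕ) (e : ℕ → ℝ) : ℝ :=
  ∑ i ∈ Icc 1 n, ((∑ j ∈ Icc i n, e j) / lam) ^ (1/β)

noncomputable def Fval (lam β : ℝ) (n : ℕ) (y : ℕ → ℝ) : ℝ :=
  ∑ i ∈ Icc 1 n, (y i / lam) ^ (1/β)

lemma base {W : ℝ → ℝ} {N n : ℕ} {β lam ybar v : ℝ}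
    (hW : IsPWF W) (hnN : n ≤ N)
    {e : ℕ → ℝ} (hFe : FeasE W N n ybar v e) {a b : ℕ} (hab : a < b) (hbn : b ≤ n)
    (hz : ∀ i, i ≤ n → i ≠ a → i ≠ b → e i = 0) :
    ∃ p : ℕ × ℕ, p ∈ Sset W N n ybar v ∧
      Gfun lam β n e = Fval lam β n (corner W N ybar v p.1 p.2) := by
  have hbN : b ≤ N := hbn.trans hnN
  have han : a ≤ n := le_of_lt (lt_of_lt_of_le hab hbn)
  have gap : 0 < Hw W N b - Hw W N a := Hw_gap_pos hW hab hbN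
  obtain ⟨hnn, hsum, hwsum⟩ := hFe
  have hea := hnn a han
  have heb := hnn b hbn
  have hamem : a ∈ range (n+1) := by simp; omega
  have hbmem : b ∈ range (n+1) := by simp; omega
  have hzr : ∀ i ∈ range (n+1), i ≠ a → i ≠ b → e i = 0 := by
    intro i hi h1 h2
    exact hz i (by simpa [Nat.lt_succ_iff] using mem_range.1 hi) h1 h2
  have htot : e a + e b = ybar := by
    have h1 := sum_two (g := e) hab.ne (range (n+1)) hzr
    rw [hsum, if_pos hamem, if_pos hbmem] at h1
    linarith
  have heb' : e b ≤ ybar := by linarith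
  have hw2 : Hw W N a * e a + Hw W N b * e b = v := by
    have h1 := sum_two (g := fun i => Hw W N i * e i) hab.ne (range (n+1))
      (by intro i hi h1 h2; simp [hzr i hi h1 h2])
    rw [hwsum, if_pos hamem, if_pos hbmem] at h1
    linarith
  have hSi : ∀ i, 1 ≤ i → i ≤ n →
      ∑ j ∈ Icc i n, e j = (if i ≤ a then e a else 0) + (if i ≤ b then e b else 0) := by
    intro i h1 h2
    rw [sum_two (g := e) hab.ne (Icc i n)
      (fun j hj j1 j2 => hz j (mem_Icc.1 hj).2 j1 j2)]
    by_cases hia : i ≤ a <;> by_cases hib : i ≤ b <;>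
      simp [mem_Icc, hia, hib, han, hbn]
  rcases Nat.eq_zero_or_pos a with rfl | ha1
  · -- a = 0
    have hH0 : Hw W N 0 = 0 := Hw_zero W N
    have hbne : Hw W N b ≠ 0 := by rw [hH0] at gap; linarith
    have hve : v = Hw W N b * e b := by rw [← hw2, hH0]; ring
    have hYe : Yf W N ybar v 0 b = e b := by
      unfold Yf; rw [hH0, hve]
      field_simp
      ring
    refine ⟨(0, b), ?_, ?_⟩
    · unfold Sset
      simp only [mem_filter, mem_product, mem_range]
      exact ⟨⟨by omega, by omega⟩, hab, by rw [hYe]; exact heb, by rw [hYe]; exact heb'⟩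
    · unfold Gfun Fval corner
      apply Finset.sum_congr rfl
      intro i hi
      rw [mem_Icc] at hi
      rw [hSi i hi.1 hi.2]
      have h0 : ¬ i ≤ 0 := by omega
      simp [h0, hYe]
  · -- 1 ≤ a
    have hYe : Yf W N ybar v a b = e b := by
      have hea' : e a = ybar - e b := by linarith
      have hlin : v - ybar * Hw W N a = e b * (Hw W N b - Hw W N a) := by
        rw [← hw2, hea']; ring
      unfold Yf; rw [hlin]
      exact mul_div_cancel_right₀ (e b) gap.ne'
    refine ⟨(a, b), ?_, ?_⟩
    · unfold Sset
      simp only [mem_filter, mem_product, mem_range]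
      exact ⟨⟨by omega, by omega⟩, hab, by rw [hYe]; exact heb, by rw [hYe]; exact heb'⟩
    · unfold Gfun Fval corner
      apply Finset.sum_congr rfl
      intro i hi
      rw [mem_Icc] at hi
      rw [hSi i hi.1 hi.2]
      by_cases hia : i ≤ a
      · have hib : i ≤ b := by omega
        simp [hia, hib, htot]
      · simp [hia, hYe]

lemma step {W : ℝ → ℝ} {N n : ℕ} {β lam ybar v : ℝ}
    (hW : IsPWF W) (hnN : n ≤ N) (hβ0 : 0 < β) (hβ1 : β < 1) (hlam : 0 < lam)
    {e : ℕ → ℝ} (hFe : FeasE W N n ybar v e) {a b c : ℕ}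
    (hab : a < b) (hbc : b < c) (hcn : c ≤ n)
    (hea : e a ≠ 0) (heb : e b ≠ 0) (hec : e c ≠ 0) :
    ∃ e1 e2 : ℕ → ℝ, ∃ θ : ℝ,
      FeasE W N n ybar v e1 ∧ FeasE W N n ybar v e2 ∧
      e1 b = 0 ∧ (e2 a = 0 ∨ e2 c = 0) ∧
      (∀ i, i ≠ a → i ≠ b → i ≠ c → e1 i = e i ∧ e2 i = e i) ∧
      0 ≤ θ ∧ θ ≤ 1 ∧
      Gfun lam β n e ≤ θ * Gfun lam β n e1 + (1 - θ) * Gfun lam β n e2 := by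
  obtain ⟨hnn, hsum, hwsum⟩ := hFe
  have han : a ≤ n := by omega
  have hbn : b ≤ n := by omega
  have hea' : 0 < e a := lt_of_le_of_ne (hnn a han) (Ne.symm hea)
  have heb' : 0 < e b := lt_of_le_of_ne (hnn b hbn) (Ne.symm heb)
  have hec' : 0 < e c := lt_of_le_of_ne (hnn c hcn) (Ne.symm hec)
  set A := Hw W N a with hA
  set B := Hw W N b with hB
  set C := Hw W N c with hC
  have hAB : 0 < B - A := Hw_gap_pos hW hab (by omega)
  have hBC : 0 < C - B := Hw_gap_pos hW hbc (by omega)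
  have hAC : 0 < C - A := by linarith
  obtain ⟨u, hua, hub, huc, huo⟩ : ∃ u : ℕ → ℝ, u a = C - B ∧ u b = A - C ∧ u c = B - A ∧
      ∀ i, i ≠ a → i ≠ b → i ≠ c → u i = 0 := by
    refine ⟨fun i => if i = a then C - B else if i = b then A - C else
      if i = c then B - A else 0, ?_, ?_, ?_, ?_⟩
    · simp
    · have h1 : b ≠ a := by omega
      simp [h1]
    · have h1 : c ≠ a := by omega
      have h2 : c ≠ b := by omega
      simp [h1, h2]
    · intro i h1 h2 h3; simp [h1, h2, h3]
  set t1 : ℝ := e b / (C - A) with ht1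
  set r : ℝ := min (e a / (C - B)) (e c / (B - A)) with hr
  have ht1pos : 0 < t1 := div_pos heb' hAC
  have hrpos : 0 < r := lt_min (div_pos hea' hBC) (div_pos hec' hAB)
  set e1 : ℕ → ℝ := fun i => e i + t1 * u i with he1
  set e2 : ℕ → ℝ := fun i => e i - r * u i with he2
  set θ : ℝ := r / (t1 + r) with hθ
  have htr : 0 < t1 + r := by linarith
  have hθ0 : 0 ≤ θ := div_nonneg hrpos.le htr.le
  have hθ1 : θ ≤ 1 := by rw [hθ, div_le_one htr]; linarith
  -- sums of u
  have husum : ∀ coef : ℕ → ℝ, ∑ i ∈ range (n+1), coef i * u i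
      = coef a * (C - B) + coef b * (A - C) + coef c * (B - A) := by
    intro coef
    rw [sum_three (g := fun i => coef i * u i) (a := a) (b := b) (c := c)
      (by omega) (by omega) (by omega)
      (range (n+1)) (by intro i _ h1 h2 h3; simp [huo i h1 h2 h3])]
    have hma : a ∈ range (n+1) := by simp; omega
    have hmb : b ∈ range (n+1) := by simp; omega
    have hmc : c ∈ range (n+1) := by simp; omega
    rw [if_pos hma, if_pos hmb, if_pos hmc]
    simp only [hua, hub, huc]
  have hu0 : ∑ i ∈ range (n+1), u i = 0 := by
    have h := husum (fun _ => 1)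
    simp only [one_mul] at h
    rw [h]; ring
  have huH : ∑ i ∈ range (n+1), Hw W N i * u i = 0 := by
    rw [husum (fun i => Hw W N i), ← hA, ← hB, ← hC]; ring
  -- e1 b = 0
  have he1b : e1 b = 0 := by
    show e b + t1 * u b = 0
    rw [hub, ht1]
    have h : e b + e b / (C - A) * (A - C) = e b - e b / (C - A) * (C - A) := by ring
    rw [h, div_mul_cancel₀ _ hAC.ne', sub_self]
  -- Feasibility of e1
  have hFe1 : FeasE W N n ybar v e1 := by
    refine ⟨?_, ?_, ?_⟩
    · intro i hi
      rcases eq_or_ne i a with h1 | h1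
      · rw [h1]; show 0 ≤ e a + t1 * u a
        rw [hua]; positivity
      rcases eq_or_ne i b with h2 | h2
      · rw [h2, he1b]
      rcases eq_or_ne i c with h3 | h3
      · rw [h3]; show 0 ≤ e c + t1 * u c
        rw [huc]; positivity
      · show 0 ≤ e i + t1 * u i
        rw [huo i h1 h2 h3, mul_zero, add_zero]; exact hnn i hi
    · show ∑ i ∈ range (n+1), (e i + t1 * u i) = ybar
      rw [Finset.sum_add_distrib, ← Finset.mul_sum, hu0, hsum]; ring
    · show ∑ i ∈ range (n+1), Hw W N i * (e i + t1 * u i) = v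
      have h : ∀ i ∈ range (n+1), Hw W N i * (e i + t1 * u i)
          = Hw W N i * e i + t1 * (Hw W N i * u i) := by intro i _; ring
      rw [Finset.sum_congr rfl h, Finset.sum_add_distrib, ← Finset.mul_sum, huH, hwsum]; ring
  have hra : r * (C - B) ≤ e a := by
    rw [← le_div_iff₀ hBC]; exact min_le_left _ _
  have hrc : r * (B - A) ≤ e c := by
    rw [← le_div_iff₀ hAB]; exact min_le_right _ _
  have hFe2 : FeasE W N n ybar v e2 := by
    refine ⟨?_, ?_, ?_⟩
    · intro i hi
      rcases eq_or_ne i a with h1 | h1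
      · rw [h1]; show 0 ≤ e a - r * u a
        rw [hua]; linarith
      rcases eq_or_ne i b with h2 | h2
      · rw [h2]; show 0 ≤ e b - r * u b
        rw [hub]
        nlinarith [mul_pos hrpos hAC]
      rcases eq_or_ne i c with h3 | h3
      · rw [h3]; show 0 ≤ e c - r * u c
        rw [huc]; linarith
      · show 0 ≤ e i - r * u i
        rw [huo i h1 h2 h3, mul_zero, sub_zero]; exact hnn i hi
    · show ∑ i ∈ range (n+1), (e i - r * u i) = ybar
      have h : ∀ i ∈ range (n+1), e i - r * u i = e i + (-r) * u i := by intro i _; ring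
      rw [Finset.sum_congr rfl h, Finset.sum_add_distrib, ← Finset.mul_sum, hu0, hsum]; ring
    · show ∑ i ∈ range (n+1), Hw W N i * (e i - r * u i) = v
      have h : ∀ i ∈ range (n+1), Hw W N i * (e i - r * u i)
          = Hw W N i * e i + (-r) * (Hw W N i * u i) := by intro i _; ring
      rw [Finset.sum_congr rfl h, Finset.sum_add_distrib, ← Finset.mul_sum, huH, hwsum]; ring
  have he2ac : e2 a = 0 ∨ e2 c = 0 := by
    rcases le_total (e a / (C - B)) (e c / (B - A)) with h | h
    · left
      show e a - r * u a = 0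
      rw [hua, hr, min_eq_left h, div_mul_cancel₀ _ hBC.ne', sub_self]
    · right
      show e c - r * u c = 0
      rw [huc, hr, min_eq_right h, div_mul_cancel₀ _ hAB.ne', sub_self]
  have hother : ∀ i, i ≠ a → i ≠ b → i ≠ c → e1 i = e i ∧ e2 i = e i := by
    intro i h1 h2 h3
    constructor
    · show e i + t1 * u i = e i
      rw [huo i h1 h2 h3]; ring
    · show e i - r * u i = e i
      rw [huo i h1 h2 h3]; ring
  -- combination
  have hcomb : ∀ i, e i = θ * e1 i + (1 - θ) * e2 i := by
    intro i
    show e i = θ * (e i + t1 * u i) + (1 - θ) * (e i - r * u i)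
    rw [hθ]
    field_simp
    ring
  refine ⟨e1, e2, θ, hFe1, hFe2, he1b, he2ac, hother, hθ0, hθ1, ?_⟩
  have hGle : ∀ i ∈ Icc 1 n,
      ((∑ j ∈ Icc i n, e j) / lam) ^ (1/β)
        ≤ θ * (((∑ j ∈ Icc i n, e1 j) / lam) ^ (1/β))
          + (1 - θ) * (((∑ j ∈ Icc i n, e2 j) / lam) ^ (1/β)) := by
    intro i hi
    have hS : ∑ j ∈ Icc i n, e j
        = θ * (∑ j ∈ Icc i n, e1 j) + (1 - θ) * (∑ j ∈ Icc i n, e2 j) := by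
      rw [Finset.mul_sum, Finset.mul_sum, ← Finset.sum_add_distrib]
      exact Finset.sum_congr rfl (fun j _ => hcomb j)
    rw [hS]
    exact phi_convex hβ0 hβ1 hlam
      (Finset.sum_nonneg (fun j hj => hFe1.1 j (mem_Icc.1 hj).2))
      (Finset.sum_nonneg (fun j hj => hFe2.1 j (mem_Icc.1 hj).2))
      hθ0 (by linarith) (by ring)
  calc Gfun lam β n e ≤ ∑ i ∈ Icc 1 n,
        (θ * (((∑ j ∈ Icc i n, e1 j) / lam) ^ (1/β))
          + (1 - θ) * (((∑ j ∈ Icc i n, e2 j) / lam) ^ (1/β))) :=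
        Finset.sum_le_sum hGle
    _ = θ * Gfun lam β n e1 + (1 - θ) * Gfun lam β n e2 := by
        rw [Finset.sum_add_distrib, ← Finset.mul_sum, ← Finset.mul_sum]; rfl

lemma key {W : ℝ → ℝ} {N n : ℕ} {β lam ybar v : ℝ}
    (hW : IsPWF W) (hn1 : 1 ≤ n) (hnN : n ≤ N) (hβ0 : 0 < β) (hβ1 : β < 1) (hlam : 0 < lam)
    (Mv : ℝ)
    (hM : ∀ p ∈ Sset W N n ybar v, Fval lam β n (corner W N ybar v p.1 p.2) ≤ Mv) :
    ∀ m : ℕ, ∀ e : ℕ → ℝ, FeasE W N n ybar v e →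
      ((range (n+1)).filter (fun i => e i ≠ 0)).card ≤ m →
      Gfun lam β n e ≤ Mv := by
  have hbase : ∀ e : ℕ → ℝ, FeasE W N n ybar v e →
      ((range (n+1)).filter (fun i => e i ≠ 0)).card ≤ 2 → Gfun lam β n e ≤ Mv := by
    intro e hFe hcard
    set s := (range (n+1)).filter (fun i => e i ≠ 0) with hs
    have hzs : ∀ a b : ℕ, (∀ i ∈ s, i = a ∨ i = b) → a < b → b ≤ n → Gfun lam β n e ≤ Mv := by
      intro a b hab' hab hbn
      have hz : ∀ i, i ≤ n → i ≠ a → i ≠ b → e i = 0 := by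
        intro i hin h1 h2
        by_contra hne
        have : i ∈ s := by
          rw [hs, mem_filter, mem_range]
          exact ⟨by omega, hne⟩
        rcases hab' i this with h | h <;> [exact h1 h; exact h2 h]
      obtain ⟨p, hp, heq⟩ := base (β := β) (lam := lam) hW hnN hFe hab hbn hz
      rw [heq]; exact hM p hp
    have hcases : s.card = 0 ∨ s.card = 1 ∨ s.card = 2 := by omega
    have hsub : ∀ x ∈ s, x ≤ n := by
      intro x hx
      rw [hs, mem_filter, mem_range] at hx
      omega
    rcases hcases with h0 | h1 | h2
    · apply hzs 0 n
      · intro i hi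
        exact absurd hi (by simp [Finset.card_eq_zero.1 h0])
      · omega
      · exact le_rfl
    · obtain ⟨x, hx⟩ := Finset.card_eq_one.1 h1
      have hxn : x ≤ n := hsub x (hx ▸ Finset.mem_singleton_self x)
      rcases Nat.eq_zero_or_pos x with rfl | hx1
      · apply hzs 0 n
        · intro i hi; rw [hx, Finset.mem_singleton] at hi; exact Or.inl hi
        · omega
        · exact le_rfl
      · apply hzs 0 x
        · intro i hi; rw [hx, Finset.mem_singleton] at hi; exact Or.inr hi
        · omega
        · exact hxn
    · obtain ⟨x, y, hxy, hx⟩ := Finset.card_eq_two.1 h2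
      have hxn : x ≤ n := hsub x (hx ▸ by simp)
      have hyn : y ≤ n := hsub y (hx ▸ by simp)
      have hmem : ∀ i ∈ s, i = x ∨ i = y := by
        intro i hi; rw [hx] at hi; simpa using hi
      rcases Nat.lt_or_ge x y with h | h
      · exact hzs x y hmem h hyn
      · have h' : y < x := by omega
        apply hzs y x (fun i hi => (hmem i hi).symm) h' hxn
  intro m
  induction m with
  | zero =>
    intro e hFe hcard
    exact hbase e hFe (by omega)
  | succ m ih =>
    intro e hFe hcard
    set s := (range (n+1)).filter (fun i => e i ≠ 0) with hs
    replace hcard : s.card ≤ m + 1 := hcard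
    by_cases h2 : s.card ≤ 2
    · exact hbase e hFe h2
    · push_neg at h2
      -- extract three ordered elements of the support
      have hne1 : s.Nonempty := Finset.card_pos.1 (by omega)
      set a := s.min' hne1 with ha
      have hasm : a ∈ s := Finset.min'_mem s hne1
      set s1 := s.erase a with hs1
      have hcard1 : s1.card = s.card - 1 := Finset.card_erase_of_mem hasm
      have hne2 : s1.Nonempty := Finset.card_pos.1 (by omega)
      set b := s1.min' hne2 with hb
      have hbsm1 : b ∈ s1 := Finset.min'_mem s1 hne2
      have hbsm : b ∈ s := Finset.mem_of_mem_erase hbsm1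
      set s2 := s1.erase b with hs2
      have hcard2 : s2.card = s1.card - 1 := Finset.card_erase_of_mem hbsm1
      have hne3 : s2.Nonempty := Finset.card_pos.1 (by omega)
      set c := s2.min' hne3 with hc
      have hcsm2 : c ∈ s2 := Finset.min'_mem s2 hne3
      have hcsm1 : c ∈ s1 := Finset.mem_of_mem_erase hcsm2
      have hcsm : c ∈ s := Finset.mem_of_mem_erase hcsm1
      have hab : a < b := lt_of_le_of_ne (Finset.min'_le s b hbsm)
        (Ne.symm (Finset.ne_of_mem_erase hbsm1))
      have hbc : b < c := lt_of_le_of_ne (Finset.min'_le s1 c hcsm1)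
        (Ne.symm (Finset.ne_of_mem_erase hcsm2))
      have hmemn : ∀ x ∈ s, x ≤ n ∧ e x ≠ 0 := by
        intro x hx
        rw [hs, mem_filter, mem_range] at hx
        exact ⟨by omega, hx.2⟩
      have hcn : c ≤ n := (hmemn c hcsm).1
      obtain ⟨e1, e2, θ, hFe1, hFe2, he1b, he2ac, hother, hθ0, hθ1, hGle⟩ :=
        step (β := β) (lam := lam) hW hnN hβ0 hβ1 hlam hFe hab hbc hcn
          (hmemn a hasm).2 (hmemn b hbsm).2 (hmemn c hcsm).2
      -- support bookkeeping
      have hsupp : ∀ f : ℕ → ℝ, ∀ x : ℕ, x ∈ s → f x = 0 →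
          (∀ i, i ≠ a → i ≠ b → i ≠ c → f i = e i) →
          ((range (n+1)).filter (fun i => f i ≠ 0)).card ≤ m := by
        intro f x hxs hfx hfe
        have hss : (range (n+1)).filter (fun i => f i ≠ 0) ⊆ s.erase x := by
          intro i hi
          rw [mem_filter, mem_range] at hi
          have hix : i ≠ x := by
            intro h; rw [h] at hi; exact hi.2 hfx
          refine Finset.mem_erase.2 ⟨hix, ?_⟩
          rw [hs, mem_filter, mem_range]
          refine ⟨hi.1, ?_⟩
          rcases eq_or_ne i a with h | h
          · rw [h]; exact (hmemn a hasm).2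
          rcases eq_or_ne i b with h' | h'
          · rw [h']; exact (hmemn b hbsm).2
          rcases eq_or_ne i c with h'' | h''
          · rw [h'']; exact (hmemn c hcsm).2
          · rw [← hfe i h h' h'']; exact hi.2
        calc ((range (n+1)).filter (fun i => f i ≠ 0)).card
            ≤ (s.erase x).card := Finset.card_le_card hss
          _ = s.card - 1 := Finset.card_erase_of_mem hxs
          _ ≤ m := by omega
      have hG1 : Gfun lam β n e1 ≤ Mv :=
        ih e1 hFe1 (hsupp e1 b hbsm he1b (fun i _ h2 _ => (hother i ‹_› h2 ‹_›).1))
      have hG2 : Gfun lam β n e2 ≤ Mv := by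
        rcases he2ac with h | h
        · exact ih e2 hFe2 (hsupp e2 a hasm h (fun i h1 h2 h3 => (hother i h1 h2 h3).2))
        · exact ih e2 hFe2 (hsupp e2 c hcsm h (fun i h1 h2 h3 => (hother i h1 h2 h3).2))
      calc Gfun lam β n e ≤ θ * Gfun lam β n e1 + (1 - θ) * Gfun lam β n e2 := hGle
        _ ≤ θ * Mv + (1 - θ) * Mv := by
            apply add_le_add
            · exact mul_le_mul_of_nonneg_left hG1 hθ0
            · exact mul_le_mul_of_nonneg_left hG2 (by linarith)
        _ = Mv := by ring

lemma feas_to_e {W : ℝ → ℝ} {N n : ℕ} {β lam ybar v : ℝ}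
    (hn1 : 1 ≤ n) {y : ℕ → ℝ} (hy : PLossFeasible W N n ybar v y) :
    ∃ e : ℕ → ℝ, FeasE W N n ybar v e ∧
      Gfun lam β n e = ∑ i ∈ Icc 1 n, (y i / lam) ^ (1/β) := by
  obtain ⟨hy1, hyn, hchain, hysum⟩ := hy
  have hmono : ∀ i j, 1 ≤ i → i ≤ j → j ≤ n → y j ≤ y i := by
    intro i j h1 hij hjn
    induction j, hij using Nat.le_induction with
    | base => exact le_rfl
    | succ j hij ih =>
      have hj1 : y (j+1) ≤ y j := hchain j (by rw [mem_Icc]; omega)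
      exact hj1.trans (ih (by omega))
  set yt : ℕ → ℝ := fun j => if j ≤ n then y j else 0 with hyt
  set e : ℕ → ℝ := fun j => if j = 0 then ybar - y 1 else yt j - yt (j+1) with he
  have heval : ∀ j, 1 ≤ j → e j = yt j - yt (j+1) := by
    intro j hj
    simp only [he]
    rw [if_neg (by omega)]
  have hIcc : ∀ i, 1 ≤ i → i ≤ n → ∑ j ∈ Icc i n, e j = y i := by
    intro i h1 h2
    have hc : ∀ j ∈ Icc i n, e j = yt j - yt (j+1) := by
      intro j hj
      exact heval j (by rw [mem_Icc] at hj; omega)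
    rw [Finset.sum_congr rfl hc, telescope yt n i h2]
    simp only [hyt]
    rw [if_pos h2, if_neg (by omega)]
    ring
  refine ⟨e, ⟨?_, ?_, ?_⟩, ?_⟩
  · intro j hj
    rcases Nat.eq_zero_or_pos j with rfl | hj1
    · simp only [he, if_pos rfl]
      linarith
    · rw [heval j hj1]
      simp only [hyt]
      rcases Nat.lt_or_ge j n with h | h
      · rw [if_pos hj, if_pos (by omega)]
        have := hchain j (by rw [mem_Icc]; omega)
        linarith
      · have hjn : j = n := by omega
        rw [if_pos hj, if_neg (by omega)]
        subst hjn
        linarith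
  · have hins : range (n+1) = insert 0 (Icc 1 n) := by
      ext x; simp only [mem_range, Finset.mem_insert, mem_Icc]; omega
    rw [hins, Finset.sum_insert (by simp), hIcc 1 le_rfl hn1]
    simp only [he, if_pos rfl]
    ring
  · have hins : range (n+1) = insert 0 (Icc 1 n) := by
      ext x; simp only [mem_range, Finset.mem_insert, mem_Icc]; omega
    rw [hins, Finset.sum_insert (by simp), Hw_zero, zero_mul, zero_add]
    have hsw := swap (lossW W N) e n
    have : ∀ j ∈ Icc 1 n, Hw W N j * e j = (∑ i ∈ Icc 1 j, lossW W N i) * e j := by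
      intro j _; rfl
    rw [Finset.sum_congr rfl this, hsw]
    rw [← hysum]
    apply Finset.sum_congr rfl
    intro i hi
    rw [mem_Icc] at hi
    rw [hIcc i hi.1 hi.2]
  · unfold Gfun
    apply Finset.sum_congr rfl
    intro i hi
    rw [mem_Icc] at hi
    rw [hIcc i hi.1 hi.2]

lemma Icc_succ (a b : ℕ) : Icc (a+1) b = Ioc a b := by
  ext t; simp [mem_Icc, mem_Ioc]

end PLossAux

open PLossAux

/-- under `0 ≤ v ≤ ȳ·∑_{i≤n} h⁻_i`, there are integers `0 ≤ ℓ₁ < ℓ₂ ≤ n`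
and `Y = (v − ȳ·∑_{i≤ℓ₁} h⁻_i)/∑_{i=ℓ₁+1}^{ℓ₂} h⁻_i` with `0 ≤ Y ≤ ȳ` such that the vector
taking the value `ȳ` on `{1,…,ℓ₁}`, `Y` on `{ℓ₁+1,…,ℓ₂}` and `0` on `{ℓ₂+1,…,n}` is a
global optimum of the price-constrained loss subproblem. -/
theorem ploss_optimal_solution (W : ℝ → ℝ) (N n : ℕ) (β lam ybar v : ℝ)
    (hW : IsPWF W) (hn1 : 1 ≤ n) (hnN : n ≤ N)
    (hβ0 : 0 < β) (hβ1 : β < 1) (hlam : 0 < lam) (hybar : 0 < ybar)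
    (hv0 : 0 ≤ v) (hv1 : v ≤ ybar * ∑ i ∈ Finset.Icc 1 n, lossW W N i) :
    ∃ l1 l2 : ℕ, ∃ Y : ℝ, l1 < l2 ∧ l2 ≤ n ∧
      Y = (v - ybar * ∑ i ∈ Finset.Icc 1 l1, lossW W N i) /
            ∑ i ∈ Finset.Icc (l1 + 1) l2, lossW W N i ∧
      0 ≤ Y ∧ Y ≤ ybar ∧
      PLossFeasible W N n ybar v
        (fun i => if i ≤ l1 then ybar else if i ≤ l2 then Y else 0) ∧
      ∀ y : ℕ → ℝ, PLossFeasible W N n ybar v y →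
        -∑ i ∈ Finset.Icc 1 n,
            ((if i ≤ l1 then ybar else if i ≤ l2 then Y else 0) / lam) ^ (1 / β)
          ≤ -∑ i ∈ Finset.Icc 1 n, (y i / lam) ^ (1 / β) := by
  have hH0 : Hw W N 0 = 0 := Hw_zero W N
  have hHn0 : 0 < Hw W N n - Hw W N 0 := Hw_gap_pos hW (by omega) hnN
  have hHn : 0 < Hw W N n := by linarith
  have hv1' : v ≤ ybar * Hw W N n := hv1
  have hS0n : ((0, n) : ℕ × ℕ) ∈ Sset W N n ybar v := by
    unfold Sset
    simp only [Finset.mem_filter, Finset.mem_product, Finset.mem_range]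
    refine ⟨⟨by omega, by omega⟩, by omega, ?_, ?_⟩
    · unfold Yf
      rw [hH0]
      apply div_nonneg (by linarith) (by linarith)
    · unfold Yf
      rw [hH0, div_le_iff₀ (by linarith)]
      nlinarith
  obtain ⟨p, hp, hpmax⟩ := Finset.exists_max_image (Sset W N n ybar v)
    (fun p => Fval lam β n (corner W N ybar v p.1 p.2)) ⟨(0, n), hS0n⟩
  obtain ⟨l1, l2⟩ := p
  have hpS := hp
  unfold Sset at hpS
  simp only [Finset.mem_filter, Finset.mem_product, Finset.mem_range] at hpS
  obtain ⟨⟨hl1r, hl2r⟩, hl12, hY0, hY1⟩ := hpS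
  have hl2n : l2 ≤ n := by omega
  have gap : 0 < Hw W N l2 - Hw W N l1 := Hw_gap_pos hW hl12 (by omega)
  have hIocH : ∑ i ∈ Ioc l1 l2, lossW W N i = Hw W N l2 - Hw W N l1 := by
    have := Hw_split W N (le_of_lt hl12)
    linarith
  have hYmul : (Hw W N l2 - Hw W N l1) * Yf W N ybar v l1 l2 = v - ybar * Hw W N l1 := by
    unfold Yf
    rw [mul_comm, div_mul_cancel₀ _ gap.ne']
  refine ⟨l1, l2, Yf W N ybar v l1 l2, hl12, hl2n, ?_, hY0, hY1, ?_, ?_⟩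
  · show Yf W N ybar v l1 l2 = _
    unfold Yf
    rw [Icc_succ l1 l2, hIocH]
    rfl
  · refine ⟨?_, ?_, ?_, ?_⟩
    · show (if 1 ≤ l1 then ybar else if 1 ≤ l2 then Yf W N ybar v l1 l2 else 0) ≤ ybar
      split_ifs
      · exact le_rfl
      · exact hY1
      · exact hybar.le
    · show (0:ℝ) ≤ (if n ≤ l1 then ybar else if n ≤ l2 then Yf W N ybar v l1 l2 else 0)
      split_ifs
      · exact hybar.le
      · exact hY0
      · exact le_rfl
    · intro i hi
      rw [Finset.mem_Icc] at hi
      show (if i + 1 ≤ l1 then ybar else if i + 1 ≤ l2 then Yf W N ybar v l1 l2 else 0)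
        ≤ (if i ≤ l1 then ybar else if i ≤ l2 then Yf W N ybar v l1 l2 else 0)
      split_ifs <;>
        first
          | exact le_rfl
          | exact hY1
          | exact hY0
          | exact hybar.le
          | (exfalso; omega)
    · show ∑ i ∈ Finset.Icc 1 n, lossW W N i *
        (if i ≤ l1 then ybar else if i ≤ l2 then Yf W N ybar v l1 l2 else 0) = v
      rw [Icc1 n, ← Finset.sum_Ioc_consecutive _ (Nat.zero_le l2) hl2n,
        ← Finset.sum_Ioc_consecutive _ (Nat.zero_le l1) (le_of_lt hl12)]
      have h1 : ∑ i ∈ Ioc 0 l1, lossW W N i *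
          (if i ≤ l1 then ybar else if i ≤ l2 then Yf W N ybar v l1 l2 else 0)
          = ybar * Hw W N l1 := by
        have hc : ∀ i ∈ Ioc 0 l1, lossW W N i *
            (if i ≤ l1 then ybar else if i ≤ l2 then Yf W N ybar v l1 l2 else 0)
            = lossW W N i * ybar := by
          intro i hi
          rw [Finset.mem_Ioc] at hi
          rw [if_pos hi.2]
        rw [Finset.sum_congr rfl hc, ← Finset.sum_mul]
        have : Hw W N l1 = ∑ i ∈ Ioc 0 l1, lossW W N i := by unfold Hw; rw [Icc1]
        rw [this]; ring
      have h2 : ∑ i ∈ Ioc l1 l2, lossW W N i *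
          (if i ≤ l1 then ybar else if i ≤ l2 then Yf W N ybar v l1 l2 else 0)
          = (Hw W N l2 - Hw W N l1) * Yf W N ybar v l1 l2 := by
        have hc : ∀ i ∈ Ioc l1 l2, lossW W N i *
            (if i ≤ l1 then ybar else if i ≤ l2 then Yf W N ybar v l1 l2 else 0)
            = lossW W N i * Yf W N ybar v l1 l2 := by
          intro i hi
          rw [Finset.mem_Ioc] at hi
          rw [if_neg (by omega), if_pos hi.2]
        rw [Finset.sum_congr rfl hc, ← Finset.sum_mul, hIocH]
      have h3 : ∑ i ∈ Ioc l2 n, lossW W N i *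
          (if i ≤ l1 then ybar else if i ≤ l2 then Yf W N ybar v l1 l2 else 0) = 0 := by
        apply Finset.sum_eq_zero
        intro i hi
        rw [Finset.mem_Ioc] at hi
        rw [if_neg (by omega), if_neg (by omega), mul_zero]
      rw [h1, h2, h3, hYmul]
      ring
  · intro y hyF
    obtain ⟨e, hFe, hGe⟩ := feas_to_e (β := β) (lam := lam) hn1 hyF
    have hkey := key hW hn1 hnN hβ0 hβ1 hlam
      (Fval lam β n (corner W N ybar v l1 l2))
      (fun q hq => hpmax q hq)
      ((range (n+1)).filter (fun i => e i ≠ 0)).card e hFe le_rfl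
    apply neg_le_neg
    calc ∑ i ∈ Finset.Icc 1 n, (y i / lam) ^ (1 / β)
        = Gfun lam β n e := hGe.symm
      _ ≤ Fval lam β n (corner W N ybar v l1 l2) := hkey
      _ = _ := rfl
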